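/- Let k > 0, α' ∈ (−π, 0), d ∈ ℝ and (x, y) ∈ ℝ². Then the function F(R) = ∫_{−π}^0 (cos(θ−α') − 1)·exp(−ik(d sin θ + x cos θ + y sin θ))·exp(ikR cos(θ−α')) dθ satisfies F(R) = O(R^{−1}) as R → ∞. -/

import Mathlib

open scoped Real

/-- Integration-by-parts estimate for the transmitted down-going wave over the lower
semicircle (refracted angle `α' ∈ (-π, 0)`):
`F(R) = ∫_{-π}^0 (cos(θ-α') - 1) e^{-ik(d sin θ + x cos θ + y sin θ)} e^{ikR cos(θ-α')} dθ`
is `O(R⁻¹)` as `R → ∞`. -/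
theorem stmt12 (k α' d x y : ℝ) (hk : 0 < k) (hα' : α' ∈ Set.Ioo (-π) 0) :
    (fun R : ℝ => ∫ θ in (-π : ℝ)..0,
        ((Real.cos (θ - α') - 1 : ℝ) : ℂ) *
          Complex.exp (-Complex.I * (k : ℂ) *
            ((d * Real.sin θ + x * Real.cos θ + y * Real.sin θ : ℝ) : ℂ)) *
          Complex.exp (Complex.I * (k : ℂ) * (R : ℂ) * ((Real.cos (θ - α') : ℝ) : ℂ)))
      =O[Filter.atTop] fun R : ℝ => R⁻¹ := by
  obtain ⟨hα1, hα2⟩ := hα'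
  have hpi : (0:ℝ) < π := Real.pi_pos
  have hle : (-π : ℝ) ≤ 0 := by linarith
  have huIcc : Set.uIcc (-π : ℝ) 0 = Set.Icc (-π : ℝ) 0 := Set.uIcc_of_le hle
  set g : ℝ → ℂ := fun θ => Complex.exp (-Complex.I * (k : ℂ) *
      ((d * Real.sin θ + x * Real.cos θ + y * Real.sin θ : ℝ) : ℂ)) with hg
  set W : ℝ → ℂ := fun θ => ((Real.tan ((θ - α') / 2) : ℝ) : ℂ) * g θ with hWdef
  set W' : ℝ → ℂ := fun θ =>
      ((1 / Real.cos ((θ - α') / 2) ^ 2 * (1/2) : ℝ) : ℂ) * g θ +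
      ((Real.tan ((θ - α') / 2) : ℝ) : ℂ) *
        (g θ * (-Complex.I * (k : ℂ) *
          ((d * Real.cos θ - x * Real.sin θ + y * Real.cos θ : ℝ) : ℂ))) with hW'def
  -- cosine of the half angle is positive on the interval
  have hcos : ∀ θ ∈ Set.Icc (-π : ℝ) 0, 0 < Real.cos ((θ - α') / 2) := by
    intro θ hθ
    apply Real.cos_pos_of_mem_Ioo
    constructor
    · nlinarith [hθ.1]
    · nlinarith [hθ.2]
  have hgc : Continuous g := by rw [hg]; fun_prop
  -- derivative of g
  have hgd : ∀ θ : ℝ, HasDerivAt g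
      (g θ * (-Complex.I * (k : ℂ) *
        ((d * Real.cos θ - x * Real.sin θ + y * Real.cos θ : ℝ) : ℂ))) θ := by
    intro θ
    have hp : HasDerivAt (fun θ : ℝ => d * Real.sin θ + x * Real.cos θ + y * Real.sin θ)
        (d * Real.cos θ - x * Real.sin θ + y * Real.cos θ) θ := by
      have h1 := (Real.hasDerivAt_sin θ).const_mul d
      have h2 := (Real.hasDerivAt_cos θ).const_mul x
      have h3 := (Real.hasDerivAt_sin θ).const_mul y
      exact ((h1.add h2).add h3).congr_deriv (by ring)
    have := ((hp.ofReal_comp).const_mul (-Complex.I * (k : ℂ))).cexp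
    convert this using 1
  -- derivative of W
  have hWd : ∀ θ ∈ Set.Icc (-π : ℝ) 0, HasDerivAt W (W' θ) θ := by
    intro θ hθ
    have hin : HasDerivAt (fun θ : ℝ => (θ - α') / 2) (1/2) θ := by
      simpa using ((hasDerivAt_id θ).sub_const α').div_const 2
    have ht : HasDerivAt (fun θ : ℝ => Real.tan ((θ - α') / 2))
        (1 / Real.cos ((θ - α') / 2) ^ 2 * (1/2)) θ := by
      have := (Real.hasDerivAt_tan (ne_of_gt (hcos θ hθ))).comp θ hin
      simpa [Function.comp_def] using this
    exact (ht.ofReal_comp.mul (hgd θ))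
  -- continuity of W'
  have htc : ContinuousOn (fun θ : ℝ => Real.tan ((θ - α') / 2)) (Set.Icc (-π : ℝ) 0) := by
    have heq : Set.EqOn (fun θ : ℝ => Real.tan ((θ - α') / 2))
        (fun θ : ℝ => Real.sin ((θ - α') / 2) / Real.cos ((θ - α') / 2))
        (Set.Icc (-π : ℝ) 0) := fun θ _ => Real.tan_eq_sin_div_cos _
    refine ContinuousOn.congr ?_ heq
    exact ContinuousOn.div (by fun_prop) (by fun_prop)
      (fun θ hθ => (hcos θ hθ).ne')
  have hW'cont : ContinuousOn W' (Set.Icc (-π : ℝ) 0) := by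
    rw [hW'def]
    apply ContinuousOn.add
    · apply ContinuousOn.mul _ hgc.continuousOn
      apply Continuous.comp_continuousOn Complex.continuous_ofReal
      apply ContinuousOn.mul _ continuousOn_const
      exact ContinuousOn.div continuousOn_const (by fun_prop)
        (fun θ hθ => pow_ne_zero 2 (hcos θ hθ).ne')
    · apply ContinuousOn.mul
      · exact Complex.continuous_ofReal.comp_continuousOn htc
      · exact (hgc.mul (by fun_prop)).continuousOn
  have hW'int : IntervalIntegrable W' MeasureTheory.volume (-π) 0 :=
    (huIcc ▸ hW'cont).intervalIntegrable
  -- the constant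
  set M : ℝ := ‖W 0‖ + ‖W (-π)‖ + ∫ θ in (-π:ℝ)..0, ‖W' θ‖ with hM
  rw [Asymptotics.isBigO_iff]
  refine ⟨M / k, ?_⟩
  filter_upwards [Filter.eventually_gt_atTop 0] with R hR
  set vR : ℝ → ℂ := fun θ =>
    Complex.exp (Complex.I * (k : ℂ) * (R : ℂ) * ((Real.cos (θ - α') : ℝ) : ℂ)) with hvR
  set v'R : ℝ → ℂ := fun θ =>
    vR θ * (Complex.I * (k : ℂ) * (R : ℂ) * ((-Real.sin (θ - α') : ℝ) : ℂ)) with hv'R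
  have hvd : ∀ θ : ℝ, HasDerivAt vR (v'R θ) θ := by
    intro θ
    have hc : HasDerivAt (fun θ : ℝ => Real.cos (θ - α')) (-Real.sin (θ - α')) θ := by
      simpa [Function.comp_def] using (Real.hasDerivAt_cos (θ - α')).comp θ ((hasDerivAt_id θ).sub_const α')
    have := ((hc.ofReal_comp).const_mul (Complex.I * (k : ℂ) * (R : ℂ))).cexp
    simpa [hvR, hv'R, mul_comm, mul_assoc, mul_left_comm] using this
  have hv'int : IntervalIntegrable v'R MeasureTheory.volume (-π) 0 := by
    apply Continuous.intervalIntegrable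
    rw [hv'R, hvR]
    fun_prop
  have hIBP := intervalIntegral.integral_mul_deriv_eq_deriv_mul
      (u := W) (u' := W') (v := vR) (v' := v'R)
      (fun θ hθ => hWd θ (huIcc ▸ hθ)) (fun θ _ => hvd θ) hW'int hv'int
  have hIkR : (Complex.I * (k : ℂ) * (R : ℂ)) ≠ 0 := by
    simp [Complex.I_ne_zero, hk.ne', hR.ne']
  -- pointwise rewriting of the integrand
  have key : Set.EqOn (fun θ : ℝ =>
      ((Real.cos (θ - α') - 1 : ℝ) : ℂ) * g θ * vR θ)
      (fun θ : ℝ => (Complex.I * (k : ℂ) * (R : ℂ))⁻¹ * (W θ * v'R θ))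
      (Set.uIcc (-π : ℝ) 0) := by
    intro θ hθ
    rw [huIcc] at hθ
    have hc2 : Real.cos ((θ - α') / 2) ≠ 0 := (hcos θ hθ).ne'
    have htan : Real.tan ((θ - α') / 2) * (-Real.sin (θ - α')) = Real.cos (θ - α') - 1 := by
      have h2 : θ - α' = 2 * ((θ - α') / 2) := by ring
      rw [Real.tan_eq_sin_div_cos, h2, Real.sin_two_mul, Real.cos_two_mul]
      have h3 : 2 * ((θ - α') / 2) / 2 = (θ - α') / 2 := by ring
      rw [h3, div_mul_eq_mul_div, div_eq_iff hc2]
      linear_combination (-2 * Real.cos ((θ - α') / 2)) *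
        Real.sin_sq_add_cos_sq ((θ - α') / 2)
    have hcast : ((Real.tan ((θ - α') / 2) : ℝ) : ℂ) * ((-Real.sin (θ - α') : ℝ) : ℂ)
        = ((Real.cos (θ - α') - 1 : ℝ) : ℂ) := by exact_mod_cast congrArg Complex.ofReal htan
    have hexp : (Complex.I * (k:ℂ) * (R:ℂ))⁻¹ * (W θ * v'R θ)
        = ((Complex.I * (k:ℂ) * (R:ℂ))⁻¹ * (Complex.I * (k:ℂ) * (R:ℂ))) *
          ((((Real.tan ((θ - α') / 2) : ℝ) : ℂ) * ((-Real.sin (θ - α') : ℝ) : ℂ)) *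
            (g θ * vR θ)) := by
      simp only [hWdef, hv'R]
      ring
    show ((Real.cos (θ - α') - 1 : ℝ) : ℂ) * g θ * vR θ
        = (Complex.I * (k:ℂ) * (R:ℂ))⁻¹ * (W θ * v'R θ)
    rw [hexp, inv_mul_cancel₀ hIkR, one_mul, hcast]
    ring
  have hFR : (∫ θ in (-π:ℝ)..0, ((Real.cos (θ - α') - 1 : ℝ) : ℂ) * g θ * vR θ)
      = (Complex.I * (k : ℂ) * (R : ℂ))⁻¹ * ∫ θ in (-π:ℝ)..0, W θ * v'R θ := by
    rw [intervalIntegral.integral_congr key, intervalIntegral.integral_const_mul]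
  have hvnorm : ∀ θ : ℝ, ‖vR θ‖ = 1 := by
    intro θ
    have hre : (Complex.I * (k:ℂ) * (R:ℂ) * ((Real.cos (θ - α') : ℝ) : ℂ)).re = 0 := by
      simp only [Complex.mul_re, Complex.mul_im, Complex.I_re, Complex.I_im,
        Complex.ofReal_re, Complex.ofReal_im]
      ring
    show ‖Complex.exp (Complex.I * (k:ℂ) * (R:ℂ) * ((Real.cos (θ - α') : ℝ) : ℂ))‖ = 1
    rw [Complex.norm_exp, hre, Real.exp_zero]
  have h1 : ‖∫ θ in (-π:ℝ)..0, W' θ * vR θ‖ ≤ ∫ θ in (-π:ℝ)..0, ‖W' θ‖ := by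
    refine le_trans (intervalIntegral.norm_integral_le_integral_norm hle) (le_of_eq ?_)
    congr 1
    funext θ
    rw [norm_mul, hvnorm, mul_one]
  have hnormI : ‖(Complex.I * (k : ℂ) * (R : ℂ))⁻¹‖ = (k * R)⁻¹ := by
    rw [norm_inv]
    simp [map_mul, Complex.norm_I, Complex.norm_real,
      abs_of_pos hk, abs_of_pos hR]
  have e0 : ‖W 0 * vR 0‖ = ‖W 0‖ := by rw [norm_mul, hvnorm, mul_one]
  have e1 : ‖W (-π) * vR (-π)‖ = ‖W (-π)‖ := by rw [norm_mul, hvnorm, mul_one]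
  have hS : ‖W 0 * vR 0 - W (-π) * vR (-π) - ∫ θ in (-π:ℝ)..0, W' θ * vR θ‖ ≤ M := by
    refine le_trans (norm_sub_le _ _) ?_
    refine le_trans (add_le_add (norm_sub_le _ _) h1) (le_of_eq ?_)
    rw [e0, e1, hM]
  calc ‖∫ θ in (-π:ℝ)..0, ((Real.cos (θ - α') - 1 : ℝ) : ℂ) * g θ * vR θ‖
      = (k * R)⁻¹ * ‖W 0 * vR 0 - W (-π) * vR (-π) - ∫ θ in (-π:ℝ)..0, W' θ * vR θ‖ := by
        rw [hFR, hIBP, norm_mul, hnormI]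
    _ ≤ (k * R)⁻¹ * M := by
        apply mul_le_mul_of_nonneg_left hS
        positivity
    _ = M / k * ‖R⁻¹‖ := by
        rw [Real.norm_eq_abs, abs_of_pos (inv_pos.mpr hR), mul_inv]
        ring
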